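/- Assume the stationary Nash equilibrium p** lies in P² = [p̲, p̄]². Then for every p ∈ P² with p ≠ p**, the function 𝒢 satisfies 𝒢(p) > 0. -/

import Mathlib

open Real Filter

/-- Deterministic utility u_i(p_i, r_i) = a_i - b_i * p_i + c_i * (r_i - p_i). -/
noncomputable def util (a b c pi ri : ℝ) : ℝ := a - b * pi + c * (ri - pi)

/-- MNL demand of product H. -/
noncomputable def demH (aH aL bH bL cH cL : ℝ) (p r : ℝ × ℝ) : ℝ :=
  Real.exp (util aH bH cH p.1 r.1) /
    (1 + Real.exp (util aH bH cH p.1 r.1) + Real.exp (util aL bL cL p.2 r.2))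

/-- MNL demand of product L. -/
noncomputable def demL (aH aL bH bL cH cL : ℝ) (p r : ℝ × ℝ) : ℝ :=
  Real.exp (util aL bL cL p.2 r.2) /
    (1 + Real.exp (util aH bH cH p.1 r.1) + Real.exp (util aL bL cL p.2 r.2))

/-- Scaled derivative of the log-revenue of firm H. -/
noncomputable def GrH (aH aL bH bL cH cL : ℝ) (p r : ℝ × ℝ) : ℝ :=
  1 / ((bH + cH) * p.1) + demH aH aL bH bL cH cL p r - 1

/-- Scaled derivative of the log-revenue of firm L. -/
noncomputable def GrL (aH aL bH bL cH cL : ℝ) (p r : ℝ × ℝ) : ℝ :=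
  1 / ((bL + cL) * p.2) + demL aH aL bH bL cH cL p r - 1

/-- Stationary Nash equilibrium: positive price vector on which both scaled
derivatives vanish at price = reference price. -/
def IsSNE (aH aL bH bL cH cL : ℝ) (p : ℝ × ℝ) : Prop :=
  0 < p.1 ∧ 0 < p.2 ∧ GrH aH aL bH bL cH cL p p = 0 ∧ GrL aH aL bH bL cH cL p p = 0

/-- Projection onto the interval [lo, hi]. -/
noncomputable def proj (lo hi x : ℝ) : ℝ := min (max x lo) hi

/-- Membership of a price vector in P² = [lo, hi]². -/
def InP2 (lo hi : ℝ) (x : ℝ × ℝ) : Prop := x.1 ∈ Set.Icc lo hi ∧ x.2 ∈ Set.Icc lo hi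

/-- Squared Euclidean norm on ℝ². -/
noncomputable def norm2sq (x : ℝ × ℝ) : ℝ := x.1 ^ 2 + x.2 ^ 2

/-- The OPGA dynamics for price path `pp` and reference-price path `rr`. -/
def OPGA (aH aL bH bL cH cL lo hi alpha : ℝ) (eta : ℕ → ℝ) (pp rr : ℕ → ℝ × ℝ) : Prop :=
  (∀ t, (pp (t+1)).1 =
      proj lo hi ((pp t).1 + eta t * (bH + cH) * GrH aH aL bH bL cH cL (pp t) (rr t))) ∧
  (∀ t, (pp (t+1)).2 =
      proj lo hi ((pp t).2 + eta t * (bL + cL) * GrL aH aL bH bL cH cL (pp t) (rr t))) ∧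
  (∀ t, (rr (t+1)).1 = alpha * (rr t).1 + (1 - alpha) * (pp t).1) ∧
  (∀ t, (rr (t+1)).2 = alpha * (rr t).2 + (1 - alpha) * (pp t).2)

/-- The weighted ℓ¹ distance to the SNE. -/
noncomputable def wdist (bH bL cH cL : ℝ) (pstar p : ℝ × ℝ) : ℝ :=
  |pstar.1 - p.1| / (bH + cH) + |pstar.2 - p.2| / (bL + cL)

/-- The function 𝒢(p) = sign(p_H** − p_H)·G_H(p,p) + sign(p_L** − p_L)·G_L(p,p). -/
noncomputable def calG (aH aL bH bL cH cL : ℝ) (pstar p : ℝ × ℝ) : ℝ :=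
  Real.sign (pstar.1 - p.1) * GrH aH aL bH bL cH cL p p +
  Real.sign (pstar.2 - p.2) * GrL aH aL bH bL cH cL p p

/-- The function ℋ(p) used in the local analysis around the SNE. -/
noncomputable def calH (aH aL bH bL cH cL : ℝ) (pstar p : ℝ × ℝ) : ℝ :=
  (bH + cH) * GrH aH aL bH bL cH cL p p * (pstar.1 - p.1) +
  (bL + cL) * GrL aH aL bH bL cH cL p p * (pstar.2 - p.2)

/-- The constant M_G bounding |G_i| on P². -/
noncomputable def MG (bH bL cH cL lo : ℝ) : ℝ :=
  max (1 / ((bH + cH) * lo)) (1 / ((bL + cL) * lo)) + 1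

/-- The Lipschitz constant l_r = (1/4)·√(c_H² + c_L²). -/
noncomputable def lr (cH cL : ℝ) : ℝ := (1 / 4) * Real.sqrt (cH ^ 2 + cL ^ 2)


noncomputable def gHf (bHc bH aH bL aL : ℝ) (x y : ℝ) : ℝ :=
  1 / (bHc * x) +
    Real.exp (aH - bH * x) / (1 + Real.exp (aH - bH * x) + Real.exp (aL - bL * y)) - 1

noncomputable def gLf (bLc bH aH bL aL : ℝ) (x y : ℝ) : ℝ :=
  1 / (bLc * y) +
    Real.exp (aL - bL * y) / (1 + Real.exp (aH - bH * x) + Real.exp (aL - bL * y)) - 1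

lemma gHf_anti (bHc bH aH bL aL x x' y : ℝ) (hc : 0 < bHc) (hb : 0 < bH) (hx : 0 < x)
    (hxx : x < x') : gHf bHc bH aH bL aL x' y < gHf bHc bH aH bL aL x y := by
  set A := Real.exp (aH - bH * x) with hA
  set A' := Real.exp (aH - bH * x') with hA'
  set B := Real.exp (aL - bL * y) with hB
  have hApos : 0 < A := Real.exp_pos _
  have hA'pos : 0 < A' := Real.exp_pos _
  have hBpos : 0 < B := Real.exp_pos _
  have hAA : A' < A := Real.exp_lt_exp.2 (by nlinarith)
  have h1 : 1 / (bHc * x') < 1 / (bHc * x) :=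
    one_div_lt_one_div_of_lt (by positivity) (by nlinarith)
  have h2 : A' / (1 + A' + B) ≤ A / (1 + A + B) := by
    rw [div_le_div_iff₀ (by positivity) (by positivity)]
    nlinarith
  unfold gHf
  rw [← hA, ← hA', ← hB]
  linarith

lemma gLf_anti (bLc bH aH bL aL x y y' : ℝ) (hc : 0 < bLc) (hb : 0 < bL) (hy : 0 < y)
    (hyy : y < y') : gLf bLc bH aH bL aL x y' < gLf bLc bH aH bL aL x y := by
  set A := Real.exp (aH - bH * x) with hA
  set B := Real.exp (aL - bL * y) with hB
  set B' := Real.exp (aL - bL * y') with hB'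
  have hApos : 0 < A := Real.exp_pos _
  have hBpos : 0 < B := Real.exp_pos _
  have hB'pos : 0 < B' := Real.exp_pos _
  have hBB : B' < B := Real.exp_lt_exp.2 (by nlinarith)
  have h1 : 1 / (bLc * y') < 1 / (bLc * y) :=
    one_div_lt_one_div_of_lt (by positivity) (by nlinarith)
  have h2 : B' / (1 + A + B') ≤ B / (1 + A + B) := by
    rw [div_le_div_iff₀ (by positivity) (by positivity)]
    nlinarith
  unfold gLf
  rw [← hA, ← hB, ← hB']
  linarith

lemma sum_anti_x (bHc bLc bH aH bL aL x x' y : ℝ) (hcH : 0 < bHc) (hb : 0 < bH)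
    (hx : 0 < x) (hxx : x < x') :
    gHf bHc bH aH bL aL x' y + gLf bLc bH aH bL aL x' y <
      gHf bHc bH aH bL aL x y + gLf bLc bH aH bL aL x y := by
  set A := Real.exp (aH - bH * x) with hA
  set A' := Real.exp (aH - bH * x') with hA'
  set B := Real.exp (aL - bL * y) with hB
  have hApos : 0 < A := Real.exp_pos _
  have hA'pos : 0 < A' := Real.exp_pos _
  have hBpos : 0 < B := Real.exp_pos _
  have hAA : A' < A := Real.exp_lt_exp.2 (by nlinarith)
  have h1 : 1 / (bHc * x') < 1 / (bHc * x) :=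
    one_div_lt_one_div_of_lt (by positivity) (by nlinarith)
  have h2 : A' / (1 + A' + B) + B / (1 + A' + B) ≤
      A / (1 + A + B) + B / (1 + A + B) := by
    rw [← add_div, ← add_div,
      div_le_div_iff₀ (by positivity) (by positivity)]
    nlinarith
  unfold gHf gLf
  rw [← hA, ← hA', ← hB]
  linarith

lemma sum_anti_y (bHc bLc bH aH bL aL x y y' : ℝ) (hcL : 0 < bLc) (hb : 0 < bL)
    (hy : 0 < y) (hyy : y < y') :
    gHf bHc bH aH bL aL x y' + gLf bLc bH aH bL aL x y' <
      gHf bHc bH aH bL aL x y + gLf bLc bH aH bL aL x y := by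
  set A := Real.exp (aH - bH * x) with hA
  set B := Real.exp (aL - bL * y) with hB
  set B' := Real.exp (aL - bL * y') with hB'
  have hApos : 0 < A := Real.exp_pos _
  have hBpos : 0 < B := Real.exp_pos _
  have hB'pos : 0 < B' := Real.exp_pos _
  have hBB : B' < B := Real.exp_lt_exp.2 (by nlinarith)
  have h1 : 1 / (bLc * y') < 1 / (bLc * y) :=
    one_div_lt_one_div_of_lt (by positivity) (by nlinarith)
  have h2 : A / (1 + A + B') + B' / (1 + A + B') ≤
      A / (1 + A + B) + B / (1 + A + B) := by
    rw [← add_div, ← add_div,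
      div_le_div_iff₀ (by positivity) (by positivity)]
    nlinarith
  unfold gHf gLf
  rw [← hA, ← hB, ← hB']
  linarith

lemma diff_anti_x (bHc bLc bH aH bL aL x x' y : ℝ) (hcH : 0 < bHc) (hb : 0 < bH)
    (hx : 0 < x) (hxx : x < x') :
    gHf bHc bH aH bL aL x' y - gLf bLc bH aH bL aL x' y <
      gHf bHc bH aH bL aL x y - gLf bLc bH aH bL aL x y := by
  set A := Real.exp (aH - bH * x) with hA
  set A' := Real.exp (aH - bH * x') with hA'
  set B := Real.exp (aL - bL * y) with hB
  have hApos : 0 < A := Real.exp_pos _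
  have hA'pos : 0 < A' := Real.exp_pos _
  have hBpos : 0 < B := Real.exp_pos _
  have hAA : A' < A := Real.exp_lt_exp.2 (by nlinarith)
  have h1 : 1 / (bHc * x') < 1 / (bHc * x) :=
    one_div_lt_one_div_of_lt (by positivity) (by nlinarith)
  have h2 : A' / (1 + A' + B) - B / (1 + A' + B) ≤
      A / (1 + A + B) - B / (1 + A + B) := by
    rw [div_sub_div_same, div_sub_div_same,
      div_le_div_iff₀ (by positivity) (by positivity)]
    nlinarith
  unfold gHf gLf
  rw [← hA, ← hA', ← hB]
  linarith

lemma diff_mono_y (bHc bLc bH aH bL aL x y y' : ℝ) (hcL : 0 < bLc) (hb : 0 < bL)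
    (hy : 0 < y) (hyy : y < y') :
    gHf bHc bH aH bL aL x y - gLf bLc bH aH bL aL x y <
      gHf bHc bH aH bL aL x y' - gLf bLc bH aH bL aL x y' := by
  set A := Real.exp (aH - bH * x) with hA
  set B := Real.exp (aL - bL * y) with hB
  set B' := Real.exp (aL - bL * y') with hB'
  have hApos : 0 < A := Real.exp_pos _
  have hBpos : 0 < B := Real.exp_pos _
  have hB'pos : 0 < B' := Real.exp_pos _
  have hBB : B' < B := Real.exp_lt_exp.2 (by nlinarith)
  have h1 : 1 / (bLc * y') < 1 / (bLc * y) :=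
    one_div_lt_one_div_of_lt (by positivity) (by nlinarith)
  have h2 : A / (1 + A + B) - B / (1 + A + B) ≤
      A / (1 + A + B') - B' / (1 + A + B') := by
    rw [div_sub_div_same, div_sub_div_same,
      div_le_div_iff₀ (by positivity) (by positivity)]
    nlinarith
  unfold gHf gLf
  rw [← hA, ← hB, ← hB']
  linarith

lemma master (bHc bLc bH aH bL aL x y xs ys : ℝ)
    (hcH : 0 < bHc) (hcL : 0 < bLc) (hbH : 0 < bH) (hbL : 0 < bL)
    (hx : 0 < x) (hy : 0 < y) (hxs : 0 < xs) (hys : 0 < ys)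
    (hH : gHf bHc bH aH bL aL xs ys = 0) (hL : gLf bLc bH aH bL aL xs ys = 0)
    (hne : x ≠ xs ∨ y ≠ ys) :
    0 < Real.sign (xs - x) * gHf bHc bH aH bL aL x y +
        Real.sign (ys - y) * gLf bLc bH aH bL aL x y := by
  rcases lt_trichotomy x xs with h1 | h1 | h1 <;>
    rcases lt_trichotomy y ys with h2 | h2 | h2
  · -- x < xs, y < ys
    rw [Real.sign_of_pos (by linarith), Real.sign_of_pos (by linarith), one_mul, one_mul]
    have e1 := sum_anti_x bHc bLc bH aH bL aL x xs y hcH hbH hx h1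
    have e2 := sum_anti_y bHc bLc bH aH bL aL xs y ys hcL hbL hy h2
    linarith
  · -- x < xs, y = ys
    subst h2
    rw [sub_self, Real.sign_zero, zero_mul, add_zero,
      Real.sign_of_pos (by linarith), one_mul]
    have e1 := gHf_anti bHc bH aH bL aL x xs y hcH hbH hx h1
    linarith
  · -- x < xs, ys < y
    rw [Real.sign_of_pos (by linarith), Real.sign_of_neg (by linarith), one_mul, neg_one_mul]
    have e1 := diff_anti_x bHc bLc bH aH bL aL x xs y hcH hbH hx h1
    have e2 := diff_mono_y bHc bLc bH aH bL aL xs ys y hcL hbL hys h2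
    linarith
  · -- x = xs, y < ys
    subst h1
    rw [sub_self, Real.sign_zero, zero_mul, zero_add,
      Real.sign_of_pos (by linarith), one_mul]
    have e1 := gLf_anti bLc bH aH bL aL x y ys hcL hbL hy h2
    linarith
  · subst h1 h2
    rcases hne with h | h <;> exact absurd rfl h
  · -- x = xs, ys < y
    subst h1
    rw [sub_self, Real.sign_zero, zero_mul, zero_add,
      Real.sign_of_neg (by linarith), neg_one_mul]
    have e1 := gLf_anti bLc bH aH bL aL x ys y hcL hbL hys h2
    linarith
  · -- xs < x, y < ys
    rw [Real.sign_of_neg (by linarith), Real.sign_of_pos (by linarith), neg_one_mul, one_mul]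
    have e1 := diff_anti_x bHc bLc bH aH bL aL xs x y hcH hbH hxs h1
    have e2 := diff_mono_y bHc bLc bH aH bL aL xs y ys hcL hbL hy h2
    linarith
  · -- xs < x, y = ys
    subst h2
    rw [sub_self, Real.sign_zero, zero_mul, add_zero,
      Real.sign_of_neg (by linarith), neg_one_mul]
    have e1 := gHf_anti bHc bH aH bL aL xs x y hcH hbH hxs h1
    linarith
  · -- xs < x, ys < y
    rw [Real.sign_of_neg (by linarith), Real.sign_of_neg (by linarith), neg_one_mul, neg_one_mul]
    have e1 := sum_anti_x bHc bLc bH aH bL aL xs x y hcH hbH hxs h1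
    have e2 := sum_anti_y bHc bLc bH aH bL aL xs ys y hcL hbL hys h2
    linarith

theorem calG_pos (aH aL bH bL cH cL : ℝ)
    (hbH : 0 < bH) (hbL : 0 < bL) (hcH : 0 < cH) (hcL : 0 < cL)
    (lo hi : ℝ) (hlo : 0 < lo) (hlohi : lo ≤ hi)
    (pstar : ℝ × ℝ) (hsne : IsSNE aH aL bH bL cH cL pstar)
    (hstar : InP2 lo hi pstar) :
    ∀ p : ℝ × ℝ, InP2 lo hi p → p ≠ pstar → 0 < calG aH aL bH bL cH cL pstar p := by
  obtain ⟨hps1, hps2, hH, hL⟩ := hsne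
  intro p hp hne
  have eH : ∀ q : ℝ × ℝ, GrH aH aL bH bL cH cL q q = gHf (bH + cH) bH aH bL aL q.1 q.2 := by
    intro q; simp [GrH, demH, util, gHf]
  have eL : ∀ q : ℝ × ℝ, GrL aH aL bH bL cH cL q q = gLf (bL + cL) bH aH bL aL q.1 q.2 := by
    intro q; simp [GrL, demL, util, gLf]
  rw [eH] at hH
  rw [eL] at hL
  have hp1 : 0 < p.1 := lt_of_lt_of_le hlo hp.1.1
  have hp2 : 0 < p.2 := lt_of_lt_of_le hlo hp.2.1
  have hne' : p.1 ≠ pstar.1 ∨ p.2 ≠ pstar.2 := by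
    by_contra h
    push_neg at h
    exact hne (Prod.ext h.1 h.2)
  rw [calG, eH, eL]
  exact master (bH + cH) (bL + cL) bH aH bL aL p.1 p.2 pstar.1 pstar.2
    (by linarith) (by linarith) hbH hbL hp1 hp2 hps1 hps2 hH hL hne'
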